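/- For 0 < α < 1 and any real λ ≠ 0, one has (iλ)^{α} = (1/Γ(-α)) ∫₀^∞ (e^{-iλt} - 1) t^{-(1+α)} dt, where the integral is understood as an improper integral and (iλ)^{α} uses the principal branch. -/

import Mathlib

open Real MeasureTheory Filter Set

namespace IlAux

lemma contOn_cpow (c : ℂ) : ContinuousOn (fun t : ℝ => (t:ℂ) ^ c) (Ioi 0) := by
  intro t ht
  exact (Complex.continuousAt_ofReal_cpow_const t c (Or.inr (ne_of_gt ht))).continuousWithinAt

lemma norm_cpow (c : ℂ) {t : ℝ} (ht : 0 < t) : ‖(t:ℂ) ^ c‖ = t ^ c.re :=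
  Complex.norm_cpow_eq_rpow_re_of_pos ht c

lemma norm_exp_le {z : ℂ} (hz : 0 ≤ z.re) {t : ℝ} (ht : 0 ≤ t) :
    ‖Complex.exp (-(z * t))‖ ≤ 1 := by
  rw [Complex.norm_exp]
  have : (-(z * t)).re = -(z.re * t) := by simp
  rw [this]
  exact Real.exp_le_one_iff.mpr (by nlinarith)

lemma norm_exp_sub_one_le {z : ℂ} (hz : 0 ≤ z.re) {t : ℝ} (ht : 0 ≤ t) :
    ‖Complex.exp (-(z * t)) - 1‖ ≤ min (2 * ‖z‖ * t) 2 := by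
  have habs : ‖-(z * t)‖ = ‖z‖ * t := by
    simp [abs_of_nonneg ht]
  rcases le_total (‖z‖ * t) 1 with h | h
  · refine le_min ?_ ?_
    · have := Complex.norm_exp_sub_one_le (x := -(z * t)) (by rw [habs]; exact h)
      rw [habs] at this
      calc ‖Complex.exp (-(z * t)) - 1‖ ≤ 2 * (‖z‖ * t) := this
        _ = 2 * ‖z‖ * t := by ring
    · calc ‖Complex.exp (-(z * t)) - 1‖ ≤ ‖Complex.exp (-(z * t))‖ + ‖(1:ℂ)‖ :=
          norm_sub_le _ _
        _ ≤ 1 + 1 := by simpa using add_le_add_right (norm_exp_le hz ht) 1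
        _ = 2 := by norm_num
  · have h2 : ‖Complex.exp (-(z * t)) - 1‖ ≤ 2 := by
      calc ‖Complex.exp (-(z * t)) - 1‖ ≤ ‖Complex.exp (-(z * t))‖ + ‖(1:ℂ)‖ := norm_sub_le _ _
        _ ≤ 1 + 1 := by simpa using add_le_add_right (norm_exp_le hz ht) 1
        _ = 2 := by norm_num
    exact le_min (h2.trans (by nlinarith)) h2

lemma rpow_aux {t : ℝ} (ht : 0 < t) (α : ℝ) : t * t ^ (-(1+α)) = t ^ (-α) := by
  rw [show -α = 1 + (-(1+α)) by ring, Real.rpow_add ht, Real.rpow_one]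

variable {α : ℝ}

lemma contOn_f (z : ℂ) (α : ℝ) :
    ContinuousOn (fun t : ℝ => (Complex.exp (-(z * t)) - 1) * (t:ℂ) ^ (-(1+(α:ℂ)))) (Ioi 0) := by
  apply ContinuousOn.mul _ (contOn_cpow _)
  apply Continuous.continuousOn
  fun_prop

lemma integrableOn_rpow_Ioc {r : ℝ} (hr : -1 < r) :
    IntegrableOn (fun t : ℝ => t ^ r) (Ioc (0:ℝ) 1) := by
  have := intervalIntegral.intervalIntegrable_rpow' (a:=0) (b:=1) hr
  rwa [intervalIntegrable_iff_integrableOn_Ioc_of_le zero_le_one] at this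

lemma integrableOn_f (hα : 0 < α) (hα1 : α < 1) {z : ℂ} (hz : 0 ≤ z.re) :
    IntegrableOn (fun t : ℝ => (Complex.exp (-(z * t)) - 1) * (t:ℂ) ^ (-(1+(α:ℂ)))) (Ioi 0) := by
  rw [show Ioi (0:ℝ) = Ioc 0 1 ∪ Ioi 1 by rw [Ioc_union_Ioi_eq_Ioi zero_le_one]]
  refine IntegrableOn.union ?_ ?_
  · refine Integrable.mono' (g := fun t => 2 * ‖z‖ * t ^ (-α))
      ((integrableOn_rpow_Ioc (by linarith)).const_mul _)
      (((contOn_f z α).mono Ioc_subset_Ioi_self).aestronglyMeasurable measurableSet_Ioc) ?_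
    filter_upwards [ae_restrict_mem measurableSet_Ioc] with t ht
    have ht0 : 0 < t := ht.1
    rw [norm_mul, norm_cpow _ ht0, show (-(1+(α:ℂ))).re = -(1+α) by simp]
    calc ‖Complex.exp (-(z * t)) - 1‖ * t ^ (-(1+α))
        ≤ (2 * ‖z‖ * t) * t ^ (-(1+α)) :=
          mul_le_mul_of_nonneg_right ((norm_exp_sub_one_le hz ht0.le).trans (min_le_left _ _))
            (Real.rpow_nonneg ht0.le _)
      _ = 2 * ‖z‖ * t ^ (-α) := by rw [mul_assoc, rpow_aux ht0]
  · refine Integrable.mono' (g := fun t => 2 * t ^ (-(1+α)))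
      ((integrableOn_Ioi_rpow_of_lt (by linarith) one_pos).const_mul 2)
      (((contOn_f z α).mono (Ioi_subset_Ioi zero_le_one)).aestronglyMeasurable measurableSet_Ioi) ?_
    filter_upwards [ae_restrict_mem measurableSet_Ioi] with t ht
    have ht0 : (0:ℝ) < t := lt_trans one_pos ht
    rw [norm_mul, norm_cpow _ ht0, show (-(1+(α:ℂ))).re = -(1+α) by simp]
    exact mul_le_mul_of_nonneg_right
      ((norm_exp_sub_one_le hz ht0.le).trans (min_le_right _ _)) (Real.rpow_nonneg ht0.le _)

lemma integrableOn_exp_rpow (hα1 : α < 1) {x : ℝ} (hx : 0 < x) :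
    IntegrableOn (fun t : ℝ => Real.exp (-(x*t)) * t ^ (-α)) (Ioi 0) := by
  have h0 := Real.GammaIntegral_convergent (s := 1 - α) (by linarith)
  have h1 : IntegrableOn (fun t : ℝ => Real.exp (-(x*t)) * (x*t) ^ ((1-α)-1)) (Ioi 0) := by
    have := (integrableOn_Ioi_comp_mul_left_iff
      (fun u => Real.exp (-u) * u ^ ((1-α)-1)) 0 hx).mpr (by simpa using h0)
    simpa using this
  refine IntegrableOn.congr_fun (f := fun t : ℝ => x ^ α * (Real.exp (-(x*t)) * (x*t) ^ ((1-α)-1))) (h1.const_mul (x ^ α)) ?_ measurableSet_Ioi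
  intro t ht
  have ht0 : (0:ℝ) < t := ht
  simp only []
  rw [show (1-α)-1 = -α by ring, Real.mul_rpow hx.le ht0.le,
    show x ^ α * (Real.exp (-(x*t)) * (x ^ (-α) * t ^ (-α)))
      = (x ^ α * x ^ (-α)) * (Real.exp (-(x*t)) * t ^ (-α)) by ring,
    ← Real.rpow_add hx, add_neg_cancel, Real.rpow_zero, one_mul]

lemma tendsto_intervalIntegral {f : ℝ → ℂ} (hf : IntegrableOn f (Ioi 0)) :
    Tendsto (fun p : ℝ × ℝ => ∫ t in p.1..p.2, f t)
      ((nhdsWithin 0 (Ioi 0)) ×ˢ atTop) (nhds (∫ t in Ioi 0, f t)) := by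
  haveI : ((nhdsWithin (0:ℝ) (Ioi 0)) ×ˢ (atTop : Filter ℝ)).IsCountablyGenerated :=
    Filter.prod.isCountablyGenerated _ _
  have hupper : Tendsto (fun p : ℝ × ℝ => ∫ t in (0:ℝ)..p.2, f t)
      ((nhdsWithin 0 (Ioi 0)) ×ˢ atTop) (nhds (∫ t in Ioi 0, f t)) :=
    MeasureTheory.intervalIntegral_tendsto_integral_Ioi 0 hf tendsto_snd
  have hl0 : Tendsto (fun x : ℝ => ∫ t in Ioc (0:ℝ) x, f t) (nhdsWithin 0 (Ioi 0)) (nhds 0) := by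
    have hc : ContinuousOn (fun x : ℝ => ∫ t in Ioc (0:ℝ) x, f t) (Icc 0 1) := by
      apply intervalIntegral.continuousOn_primitive
      rw [integrableOn_Icc_iff_integrableOn_Ioc]
      exact hf.mono_set Ioc_subset_Ioi_self
    have h0 := (hc 0 (by simp [zero_le_one])).tendsto
    rw [show (∫ t in Ioc (0:ℝ) (0:ℝ), f t) = 0 by simp] at h0
    refine h0.mono_left ?_
    rw [nhdsWithin_le_iff]
    exact mem_of_superset (Ioo_mem_nhdsGT_of_mem (by simp [zero_lt_one]))
      (Ioo_subset_Icc_self)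
  have key := hupper.sub ((hl0.comp tendsto_fst))
  rw [sub_zero] at key
  refine key.congr' ?_
  have hp1 : ∀ᶠ p : ℝ × ℝ in (nhdsWithin 0 (Ioi 0)) ×ˢ atTop, 0 < p.1 :=
    tendsto_fst.eventually eventually_mem_nhdsWithin
  have hp2 : ∀ᶠ p : ℝ × ℝ in (nhdsWithin 0 (Ioi 0)) ×ˢ atTop, (0:ℝ) ≤ p.2 :=
    tendsto_snd.eventually (eventually_ge_atTop 0)
  filter_upwards [hp1, hp2] with p h1 h2
  simp only [Function.comp_apply]
  have i2 : IntervalIntegrable f volume 0 p.2 := by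
    rw [intervalIntegrable_iff_integrableOn_Ioc_of_le h2]
    exact hf.mono_set Ioc_subset_Ioi_self
  have i1 : IntervalIntegrable f volume 0 p.1 := by
    rw [intervalIntegrable_iff_integrableOn_Ioc_of_le h1.le]
    exact hf.mono_set Ioc_subset_Ioi_self
  rw [← intervalIntegral.integral_of_le h1.le]
  exact intervalIntegral.integral_interval_sub_left i2 i1

lemma T1 (hα : 0 < α) {z : ℂ} (hz : 0 ≤ z.re) :
    Tendsto (fun R : ℝ => (Complex.exp (-(z * R)) - 1) * ((R:ℂ) ^ (-(α:ℂ)) / (-(α:ℂ))))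
      atTop (nhds 0) := by
  apply squeeze_zero_norm' (a := fun R : ℝ => (2 / α) * R ^ (-α))
  · filter_upwards [eventually_gt_atTop (0:ℝ)] with R hR
    rw [norm_mul, norm_div, norm_neg, Complex.norm_real, Real.norm_eq_abs,
      abs_of_pos hα, norm_cpow _ hR, show (-(α:ℂ)).re = -α by simp]
    have h2 : ‖Complex.exp (-(z * R)) - 1‖ ≤ 2 :=
      (norm_exp_sub_one_le hz hR.le).trans (min_le_right _ _)
    have hpos : 0 ≤ R ^ (-α) / α := by positivity
    calc ‖Complex.exp (-(z * R)) - 1‖ * (R ^ (-α) / α) ≤ 2 * (R ^ (-α) / α) :=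
        mul_le_mul_of_nonneg_right h2 hpos
      _ = 2 / α * R ^ (-α) := by ring
  · simpa using (tendsto_rpow_neg_atTop hα).const_mul (2 / α)

lemma T2 (hα : 0 < α) (hα1 : α < 1) {z : ℂ} (hz : 0 ≤ z.re) :
    Tendsto (fun e : ℝ => (Complex.exp (-(z * e)) - 1) * ((e:ℂ) ^ (-(α:ℂ)) / (-(α:ℂ))))
      (nhdsWithin 0 (Ioi 0)) (nhds 0) := by
  apply squeeze_zero_norm' (a := fun e : ℝ => (2 * ‖z‖ / α) * e ^ (1 - α))
  · filter_upwards [eventually_mem_nhdsWithin] with e he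
    have he0 : (0:ℝ) < e := he
    rw [norm_mul, norm_div, norm_neg, Complex.norm_real, Real.norm_eq_abs,
      abs_of_pos hα, norm_cpow _ he0, show (-(α:ℂ)).re = -α by simp]
    have h1 : ‖Complex.exp (-(z * e)) - 1‖ ≤ 2 * ‖z‖ * e :=
      (norm_exp_sub_one_le hz he0.le).trans (min_le_left _ _)
    have hpos : 0 ≤ e ^ (-α) / α := by positivity
    calc ‖Complex.exp (-(z * e)) - 1‖ * (e ^ (-α) / α)
        ≤ (2 * ‖z‖ * e) * (e ^ (-α) / α) := mul_le_mul_of_nonneg_right h1 hpos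
      _ = (2 * ‖z‖ / α) * (e * e ^ (-α)) := by ring
      _ = (2 * ‖z‖ / α) * e ^ (1 - α) := by
          rw [show (1:ℝ) - α = 1 + -α by ring, Real.rpow_add he0, Real.rpow_one]
  · have hc : Tendsto (fun e : ℝ => e ^ (1 - α)) (nhdsWithin 0 (Ioi 0)) (nhds 0) := by
      have := (Real.continuousAt_rpow_const 0 (1 - α) (Or.inr (by linarith))).tendsto
      rw [Real.zero_rpow (by linarith : (1:ℝ) - α ≠ 0)] at this
      exact this.mono_left nhdsWithin_le_nhds
    simpa using hc.const_mul (2 * ‖z‖ / α)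

lemma byparts (hα : 0 < α) {z : ℂ} {a b : ℝ} (ha : 0 < a) (hb : 0 < b) :
    ∫ t in a..b, (Complex.exp (-(z * t)) - 1) * (t:ℂ) ^ (-(1+(α:ℂ)))
      = (Complex.exp (-(z * b)) - 1) * ((b:ℂ) ^ (-(α:ℂ)) / (-(α:ℂ)))
        - (Complex.exp (-(z * a)) - 1) * ((a:ℂ) ^ (-(α:ℂ)) / (-(α:ℂ)))
        - (z / (α:ℂ)) * ∫ t in a..b, (t:ℂ) ^ ((1 - (α:ℂ)) - 1) * Complex.exp (-(z * t)) := by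
  have hαne : ((α:ℂ)) ≠ 0 := Complex.ofReal_ne_zero.mpr hα.ne'
  have hsub : uIcc a b ⊆ Ioi 0 := fun t ht => lt_of_lt_of_le (lt_min ha hb) ht.1
  have hu : ∀ t ∈ uIcc a b, HasDerivAt (fun t : ℝ => Complex.exp (-(z * t)) - 1)
      (-z * Complex.exp (-(z * t))) t := by
    intro t _
    have hid : HasDerivAt (fun t : ℝ => -(z * (t:ℂ))) (-z) t := by
      exact ((Complex.ofRealCLM.hasDerivAt (x := t)).const_mul z).neg.congr_deriv (by simp)
    have := (hid.cexp).sub_const 1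
    simpa [mul_comm] using this
  have hv : ∀ t ∈ uIcc a b, HasDerivAt (fun y : ℝ => (y:ℂ) ^ (-(α:ℂ)) / (-(α:ℂ)))
      ((t:ℂ) ^ (-(1+(α:ℂ)))) t := by
    intro t ht
    have ht0 : (0:ℝ) < t := hsub ht
    have := hasDerivAt_ofReal_cpow_const' ht0.ne' (r := -(1+(α:ℂ)))
      (by intro h; exact hαne (by linear_combination -h))
    simpa [show -(1+(α:ℂ)) + 1 = -(α:ℂ) by ring] using this
  have hu' : IntervalIntegrable (fun t : ℝ => -z * Complex.exp (-(z * t))) volume a b := by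
    apply Continuous.intervalIntegrable
    fun_prop
  have hv' : IntervalIntegrable (fun t : ℝ => (t:ℂ) ^ (-(1+(α:ℂ)))) volume a b :=
    ((contOn_cpow _).mono hsub).intervalIntegrable
  have key := intervalIntegral.integral_mul_deriv_eq_deriv_mul hu hv hu' hv'
  rw [key]
  congr 1
  rw [← intervalIntegral.integral_const_mul]
  apply intervalIntegral.integral_congr
  intro t _
  show -z * Complex.exp (-(z * t)) * ((t:ℂ) ^ (-(α:ℂ)) / -(α:ℂ))
      = z / (α:ℂ) * ((t:ℂ) ^ ((1 - (α:ℂ)) - 1) * Complex.exp (-(z * t)))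
  rw [show ((t:ℂ)) ^ ((1 - (α:ℂ)) - 1) = (t:ℂ) ^ (-(α:ℂ)) by
    rw [show (1 - (α:ℂ)) - 1 = -(α:ℂ) by ring]]
  field_simp

lemma integrableOn_g (hα : 0 < α) (hα1 : α < 1) {x : ℝ} (hx : 0 < x) :
    IntegrableOn (fun t : ℝ => (t:ℂ) ^ ((1 - (α:ℂ)) - 1) * Complex.exp (-((x:ℂ) * t)))
      (Ioi 0) := by
  refine Integrable.mono' (integrableOn_exp_rpow hα1 hx) ?_ ?_
  · exact ((contOn_cpow _).mul (Continuous.continuousOn (by fun_prop))).aestronglyMeasurable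
      measurableSet_Ioi
  · filter_upwards [ae_restrict_mem measurableSet_Ioi] with t ht
    have ht0 : (0:ℝ) < t := ht
    rw [norm_mul, norm_cpow _ ht0, show ((1 - (α:ℂ)) - 1).re = -α by simp,
      Complex.norm_exp, show (-((x:ℂ) * t)).re = -(x * t) by simp,
      mul_comm]

lemma F_real (hα : 0 < α) (hα1 : α < 1) {x : ℝ} (hx : 0 < x) :
    (∫ t in Ioi (0:ℝ), (Complex.exp (-((x:ℂ) * t)) - 1) * (t:ℂ) ^ (-(1+(α:ℂ))))
      = Complex.Gamma (-(α:ℂ)) * (x:ℂ) ^ (α:ℂ) := by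
  have hαne : ((α:ℂ)) ≠ 0 := Complex.ofReal_ne_zero.mpr hα.ne'
  have hz : (0:ℝ) ≤ ((x:ℂ)).re := by simp [hx.le]
  haveI : ((nhdsWithin (0:ℝ) (Ioi 0)) ×ˢ (atTop : Filter ℝ)).NeBot :=
    Filter.prod_neBot.mpr ⟨inferInstance, inferInstance⟩
  have h1 := tendsto_intervalIntegral (integrableOn_f hα hα1 hz)
  have h2 := tendsto_intervalIntegral (integrableOn_g hα hα1 hx)
  have hJ := Complex.integral_cpow_mul_exp_neg_mul_Ioi (a := 1 - (α:ℂ)) (r := x)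
    (by simp; linarith) hx
  have hRHS : Tendsto (fun p : ℝ × ℝ =>
      (Complex.exp (-((x:ℂ) * p.2)) - 1) * ((p.2:ℂ) ^ (-(α:ℂ)) / (-(α:ℂ)))
      - (Complex.exp (-((x:ℂ) * p.1)) - 1) * ((p.1:ℂ) ^ (-(α:ℂ)) / (-(α:ℂ)))
      - ((x:ℂ) / (α:ℂ)) * ∫ t in p.1..p.2, (t:ℂ) ^ ((1 - (α:ℂ)) - 1)
          * Complex.exp (-((x:ℂ) * t)))
      ((nhdsWithin 0 (Ioi 0)) ×ˢ atTop)
      (nhds (0 - 0 - ((x:ℂ) / (α:ℂ)) * ∫ t in Ioi (0:ℝ), (t:ℂ) ^ ((1 - (α:ℂ)) - 1)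
          * Complex.exp (-((x:ℂ) * t)))) :=
    (((T1 hα hz).comp tendsto_snd).sub ((T2 hα hα1 hz).comp tendsto_fst)).sub
      (h2.const_mul _)
  have heq : Tendsto (fun p : ℝ × ℝ => ∫ t in p.1..p.2,
      (Complex.exp (-((x:ℂ) * t)) - 1) * (t:ℂ) ^ (-(1+(α:ℂ))))
      ((nhdsWithin 0 (Ioi 0)) ×ˢ atTop)
      (nhds (0 - 0 - ((x:ℂ) / (α:ℂ)) * ∫ t in Ioi (0:ℝ), (t:ℂ) ^ ((1 - (α:ℂ)) - 1)
          * Complex.exp (-((x:ℂ) * t)))) := by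
    refine hRHS.congr' ?_
    filter_upwards [tendsto_fst.eventually eventually_mem_nhdsWithin,
      tendsto_snd.eventually (eventually_gt_atTop (0:ℝ))] with p hp1 hp2
    exact (byparts hα hp1 hp2).symm
  have hval := tendsto_nhds_unique h1 heq
  rw [hval, hJ]
  have hGa : Complex.Gamma (1 - (α:ℂ)) = -(α:ℂ) * Complex.Gamma (-(α:ℂ)) := by
    rw [show (1:ℂ) - (α:ℂ) = -(α:ℂ) + 1 by ring]
    exact Complex.Gamma_add_one _ (neg_ne_zero.mpr hαne)
  have hpow1 : ((1:ℂ)/(x:ℂ)) ^ ((1:ℂ) - (α:ℂ)) = (((1/x) ^ (1-α) : ℝ) : ℂ) := by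
    rw [show (1:ℂ) - (α:ℂ) = ((1-α : ℝ) : ℂ) by push_cast; ring,
      show (1:ℂ)/(x:ℂ) = ((1/x : ℝ) : ℂ) by push_cast; ring,
      ← Complex.ofReal_cpow (by positivity) (1-α)]
  have hx2 : ((x:ℂ)) ^ ((α:ℂ)) = ((x ^ α : ℝ) : ℂ) := (Complex.ofReal_cpow hx.le α).symm
  have hreal : x * (1/x) ^ (1-α) = x ^ α := by
    rw [one_div, Real.inv_rpow hx.le, ← Real.rpow_neg hx.le]
    nth_rewrite 1 [← Real.rpow_one x]
    rw [← Real.rpow_add hx, show (1:ℝ) + -(1-α) = α by ring]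
  rw [hGa, hpow1, hx2, show ((x ^ α : ℝ) : ℂ) = ((x:ℝ):ℂ) * (((1/x) ^ (1-α) : ℝ) : ℂ) by
    rw [← Complex.ofReal_mul, ← hreal]]
  field_simp
  ring

lemma F_analytic (hα : 0 < α) (hα1 : α < 1) {z₀ : ℂ} (hz₀ : 0 < z₀.re) :
    DifferentiableAt ℂ
      (fun z : ℂ => ∫ t in Ioi (0:ℝ), (Complex.exp (-(z * t)) - 1) * (t:ℂ) ^ (-(1+(α:ℂ)))) z₀ := by
  set δ := z₀.re with hδ
  have hδ2 : 0 < δ/2 := by positivity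
  have key := hasDerivAt_integral_of_dominated_loc_of_deriv_le
    (F := fun (z : ℂ) (t : ℝ) => (Complex.exp (-(z * t)) - 1) * (t:ℂ) ^ (-(1+(α:ℂ))))
    (F' := fun (z : ℂ) (t : ℝ) => (-(t:ℂ) * Complex.exp (-(z * t))) * (t:ℂ) ^ (-(1+(α:ℂ))))
    (x₀ := z₀) (bound := fun t => Real.exp (-(δ/2 * t)) * t ^ (-α))
    (μ := volume.restrict (Ioi 0)) (s := Metric.ball z₀ (δ/2)) (Metric.ball_mem_nhds z₀ hδ2)
    (Eventually.of_forall fun z => (contOn_f z α).aestronglyMeasurable measurableSet_Ioi)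
    (integrableOn_f hα hα1 hz₀.le)
    ((ContinuousOn.mul (Continuous.continuousOn (by fun_prop))
      (contOn_cpow _)).aestronglyMeasurable measurableSet_Ioi)
    ?_ (integrableOn_exp_rpow hα1 hδ2) ?_
  · exact key.2.differentiableAt
  · filter_upwards [ae_restrict_mem measurableSet_Ioi] with t ht
    intro z hzb
    have ht0 : (0:ℝ) < t := ht
    have hre : δ/2 ≤ z.re := by
      have h1 : |(z - z₀).re| ≤ ‖z - z₀‖ := Complex.abs_re_le_norm _
      have h2 : ‖z - z₀‖ < δ/2 := by
        rw [← Complex.dist_eq]; exact Metric.mem_ball.mp hzb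
      have h3 : |z.re - z₀.re| < δ/2 := lt_of_le_of_lt (by simpa using h1) h2
      have := abs_sub_lt_iff.mp h3
      linarith [this.2]
    rw [norm_mul, norm_mul, norm_neg, Complex.norm_real, Real.norm_eq_abs,
      abs_of_pos ht0, Complex.norm_exp,
      show (-(z * (t:ℂ))).re = -(z.re * t) by simp, norm_cpow _ ht0,
      show (-(1+(α:ℂ))).re = -(1+α) by simp]
    calc t * Real.exp (-(z.re * t)) * t ^ (-(1+α))
        = Real.exp (-(z.re * t)) * (t * t ^ (-(1+α))) := by ring
      _ = Real.exp (-(z.re * t)) * t ^ (-α) := by rw [rpow_aux ht0]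
      _ ≤ Real.exp (-(δ/2 * t)) * t ^ (-α) := by
          apply mul_le_mul_of_nonneg_right _ (Real.rpow_nonneg ht0.le _)
          exact Real.exp_le_exp.mpr (by nlinarith)
  · apply Eventually.of_forall
    intro t z _
    have h0 : HasDerivAt (fun z : ℂ => -(z * (t:ℂ))) (-(t:ℂ)) z := by
      exact ((hasDerivAt_id z).mul_const (t:ℂ)).neg.congr_deriv (by simp)
    have := ((h0.cexp).sub_const 1).mul_const ((t:ℂ) ^ (-(1+(α:ℂ))))
    simpa [mul_comm] using this

lemma F_halfplane (hα : 0 < α) (hα1 : α < 1) {z : ℂ} (hz : 0 < z.re) :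
    (∫ t in Ioi (0:ℝ), (Complex.exp (-(z * t)) - 1) * (t:ℂ) ^ (-(1+(α:ℂ))))
      = Complex.Gamma (-(α:ℂ)) * z ^ (α:ℂ) := by
  set F := fun w : ℂ => ∫ t in Ioi (0:ℝ),
    (Complex.exp (-(w * t)) - 1) * (t:ℂ) ^ (-(1+(α:ℂ))) with hF_def
  set G := fun w : ℂ => Complex.Gamma (-(α:ℂ)) * w ^ (α:ℂ) with hG_def
  set U : Set ℂ := {w : ℂ | 0 < w.re} with hU_def
  have hopen : IsOpen U := isOpen_lt continuous_const Complex.continuous_re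
  have hF : AnalyticOnNhd ℂ F U :=
    DifferentiableOn.analyticOnNhd
      (fun w hw => (F_analytic hα hα1 hw).differentiableWithinAt) hopen
  have hG : AnalyticOnNhd ℂ G U := by
    apply DifferentiableOn.analyticOnNhd _ hopen
    intro w hw
    exact (((Complex.hasStrictDerivAt_cpow_const (Or.inl hw)).hasDerivAt.differentiableAt).const_mul
      _).differentiableWithinAt
  have hpre : IsPreconnected U := (convex_halfSpace_re_gt 0).isPreconnected
  have h1U : (1:ℂ) ∈ U := by simp [hU_def]
  have hfreq : ∃ᶠ w in nhdsWithin 1 {(1:ℂ)}ᶜ, F w = G w := by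
    have hseq : Tendsto (fun n : ℕ => (((1 + 1/(n+1) : ℝ)) : ℂ)) atTop
        (nhdsWithin 1 {(1:ℂ)}ᶜ) := by
      rw [tendsto_nhdsWithin_iff]
      constructor
      · have hr : Tendsto (fun n : ℕ => (1 + 1/(n+1) : ℝ)) atTop (nhds 1) := by
          simpa using (tendsto_one_div_add_atTop_nhds_zero_nat (𝕜 := ℝ)).const_add 1
        have := (Complex.continuous_ofReal.tendsto 1).comp hr
        simpa [Function.comp_def] using this
      · apply Eventually.of_forall
        intro n
        simp only [Set.mem_compl_iff, Set.mem_singleton_iff]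
        intro h
        have : (1 + 1/(n+1) : ℝ) = 1 := by exact_mod_cast h
        have hpos : (0:ℝ) < 1/(n+1) := by positivity
        linarith
    apply hseq.frequently
    apply Eventually.frequently
    apply Eventually.of_forall
    intro n
    exact F_real hα hα1 (by positivity : (0:ℝ) < 1 + 1/(n+1))
  exact hF.eqOn_of_preconnected_of_frequently_eq hG hpre h1U hfreq hz

lemma contOn_rpow (r : ℝ) : ContinuousOn (fun t : ℝ => t ^ r) (Ioi 0) :=
  fun t ht => (Real.continuousAt_rpow_const t r (Or.inl (ne_of_gt ht))).continuousWithinAt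

lemma bound_integrable (hα : 0 < α) (hα1 : α < 1) (c : ℝ) (hc : 0 ≤ c) :
    IntegrableOn (fun t : ℝ => min (c * t) 2 * t ^ (-(1+α))) (Ioi 0) := by
  have hmeas : ∀ s : Set ℝ, s ⊆ Ioi 0 → MeasurableSet s →
      AEStronglyMeasurable (fun t : ℝ => min (c * t) 2 * t ^ (-(1+α)))
        (volume.restrict s) := by
    intro s hs hms
    apply ContinuousOn.aestronglyMeasurable _ hms
    apply ContinuousOn.mul
    · exact ((continuous_const.mul continuous_id).min continuous_const).continuousOn
    · exact (contOn_rpow _).mono hs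
  rw [show Ioi (0:ℝ) = Ioc 0 1 ∪ Ioi 1 from (Ioc_union_Ioi_eq_Ioi zero_le_one).symm]
  refine IntegrableOn.union ?_ ?_
  · refine Integrable.mono' (g := fun t => c * t ^ (-α))
      ((integrableOn_rpow_Ioc (by linarith)).const_mul _)
      (hmeas _ Ioc_subset_Ioi_self measurableSet_Ioc) ?_
    filter_upwards [ae_restrict_mem measurableSet_Ioc] with t ht
    have ht0 : (0:ℝ) < t := ht.1
    rw [Real.norm_eq_abs, abs_of_nonneg (mul_nonneg
      (le_min (by positivity) (by norm_num)) (Real.rpow_nonneg ht0.le _))]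
    calc min (c * t) 2 * t ^ (-(1+α)) ≤ (c * t) * t ^ (-(1+α)) :=
        mul_le_mul_of_nonneg_right (min_le_left _ _) (Real.rpow_nonneg ht0.le _)
      _ = c * t ^ (-α) := by rw [mul_assoc, rpow_aux ht0]
  · refine Integrable.mono' (g := fun t => 2 * t ^ (-(1+α)))
      ((integrableOn_Ioi_rpow_of_lt (by linarith) one_pos).const_mul 2)
      (hmeas _ (Ioi_subset_Ioi zero_le_one) measurableSet_Ioi) ?_
    filter_upwards [ae_restrict_mem measurableSet_Ioi] with t ht
    have ht0 : (0:ℝ) < t := lt_trans one_pos ht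
    rw [Real.norm_eq_abs, abs_of_nonneg (mul_nonneg
      (le_min (by positivity) (by norm_num)) (Real.rpow_nonneg ht0.le _))]
    exact mul_le_mul_of_nonneg_right (min_le_right _ _) (Real.rpow_nonneg ht0.le _)

lemma F_boundary (hα : 0 < α) (hα1 : α < 1) {lam : ℝ} (hlam : lam ≠ 0) :
    (∫ t in Ioi (0:ℝ), (Complex.exp (-((Complex.I * lam) * t)) - 1) * (t:ℂ) ^ (-(1+(α:ℂ))))
      = Complex.Gamma (-(α:ℂ)) * (Complex.I * lam) ^ (α:ℂ) := by
  set z : ℂ := Complex.I * lam with hzdef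
  have hzre : z.re = 0 := by simp [hzdef]
  have hzim : z.im = lam := by simp [hzdef]
  have hznorm : ‖z‖ = |lam| := by
    rw [hzdef, norm_mul, Complex.norm_I, one_mul, Complex.norm_real, Real.norm_eq_abs]
  have hDCT : Tendsto (fun x : ℝ => ∫ t in Ioi (0:ℝ),
      (Complex.exp (-(((x:ℂ) + z) * t)) - 1) * (t:ℂ) ^ (-(1+(α:ℂ)))) (nhdsWithin 0 (Ioi 0))
      (nhds (∫ t in Ioi (0:ℝ),
        (Complex.exp (-(z * t)) - 1) * (t:ℂ) ^ (-(1+(α:ℂ))))) := by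
    apply tendsto_integral_filter_of_dominated_convergence
      (bound := fun t => min (2 * (1 + |lam|) * t) 2 * t ^ (-(1+α)))
    · exact Eventually.of_forall fun x => (contOn_f _ α).aestronglyMeasurable measurableSet_Ioi
    · filter_upwards [Ioo_mem_nhdsGT_of_mem (show (0:ℝ) ∈ Ico 0 1 by simp)] with x hx
      filter_upwards [ae_restrict_mem measurableSet_Ioi] with t ht
      have ht0 : (0:ℝ) < t := ht
      have hx0 : (0:ℝ) < x := hx.1
      have hxz_re : 0 ≤ ((x:ℂ) + z).re := by
        simp only [Complex.add_re, Complex.ofReal_re, hzre, add_zero]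
        exact hx0.le
      have hnorm : ‖(x:ℂ) + z‖ ≤ 1 + |lam| := by
        calc ‖(x:ℂ) + z‖ ≤ ‖(x:ℂ)‖ + ‖z‖ := norm_add_le _ _
          _ ≤ 1 + |lam| := by
            rw [hznorm, Complex.norm_real, Real.norm_eq_abs, abs_of_pos hx0]
            exact add_le_add_left hx.2.le _
      rw [norm_mul, norm_cpow _ ht0, show (-(1+(α:ℂ))).re = -(1+α) by simp]
      apply mul_le_mul_of_nonneg_right _ (Real.rpow_nonneg ht0.le _)
      refine (norm_exp_sub_one_le hxz_re ht0.le).trans ?_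
      refine min_le_min ?_ le_rfl
      nlinarith [mul_le_mul_of_nonneg_right hnorm ht0.le]
    · exact bound_integrable hα hα1 _ (by positivity)
    · filter_upwards [ae_restrict_mem measurableSet_Ioi] with t _
      apply Tendsto.mono_left _ nhdsWithin_le_nhds
      have hcont : Continuous (fun x : ℝ =>
          (Complex.exp (-(((x:ℂ) + z) * t)) - 1) * (t:ℂ) ^ (-(1+(α:ℂ)))) := by fun_prop
      have h0 := hcont.tendsto 0
      simpa using h0
  have hEq : ∀ᶠ x : ℝ in nhdsWithin 0 (Ioi 0), (∫ t in Ioi (0:ℝ),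
      (Complex.exp (-(((x:ℂ) + z) * t)) - 1) * (t:ℂ) ^ (-(1+(α:ℂ))))
        = Complex.Gamma (-(α:ℂ)) * ((x:ℂ) + z) ^ (α:ℂ) := by
    filter_upwards [eventually_mem_nhdsWithin] with x hx
    refine F_halfplane hα hα1 ?_
    simp only [Complex.add_re, Complex.ofReal_re, hzre, add_zero]
    exact hx
  have hG : Tendsto (fun x : ℝ => Complex.Gamma (-(α:ℂ)) * ((x:ℂ) + z) ^ (α:ℂ))
      (nhdsWithin 0 (Ioi 0)) (nhds (Complex.Gamma (-(α:ℂ)) * z ^ (α:ℂ))) := by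
    apply Tendsto.mono_left _ nhdsWithin_le_nhds
    apply Tendsto.const_mul
    have hcpow : ContinuousAt (fun w : ℂ => w ^ (α:ℂ)) z :=
      continuousAt_cpow_const (Or.inr (by rw [hzim]; exact hlam))
    have hadd : Tendsto (fun x : ℝ => (x:ℂ) + z) (nhds 0) (nhds z) := by
      have := ((Complex.continuous_ofReal.tendsto 0).add_const z)
      simpa using this
    exact hcpow.tendsto.comp hadd
  exact tendsto_nhds_unique (hDCT.congr' hEq) hG

end IlAux

open Real MeasureTheory Filter

/-- For `0 < α < 1` and real `λ ≠ 0`,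
`(iλ)^{α} = (1/Γ(-α)) ∫₀^∞ (e^{-iλt} - 1) t^{-(1+α)} dt`, the integral being improper. -/
theorem ilambda_pos_pow_eq (α lam : ℝ) (hα : 0 < α) (hα1 : α < 1) (hlam : lam ≠ 0) :
    ∃ L : ℂ,
      Tendsto (fun p : ℝ × ℝ =>
          ∫ t in p.1..p.2,
            (Complex.exp (-(Complex.I * (lam : ℂ) * (t : ℂ))) - 1) * (t : ℂ) ^ (-(1 + (α : ℂ))))
        ((nhdsWithin 0 (Set.Ioi 0)) ×ˢ atTop) (nhds L) ∧
      (Complex.I * (lam : ℂ)) ^ ((α : ℂ)) = (1 / Complex.Gamma (-(α : ℂ))) * L := by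
  have hzre : (Complex.I * (lam:ℂ)).re = 0 := by simp
  have hΓ : Complex.Gamma (-(α:ℂ)) ≠ 0 := by
    apply Complex.Gamma_ne_zero
    intro m h
    have hm : α = (m:ℝ) := by
      have := neg_inj.mp h
      exact_mod_cast this
    rcases Nat.eq_zero_or_pos m with h0 | h1
    · subst h0; simp at hm; linarith
    · have : (1:ℝ) ≤ (m:ℝ) := by exact_mod_cast h1
      linarith
  refine ⟨∫ t in Set.Ioi (0:ℝ),
      (Complex.exp (-(Complex.I * (lam:ℂ) * t)) - 1) * (t:ℂ) ^ (-(1 + (α:ℂ))), ?_, ?_⟩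
  · exact IlAux.tendsto_intervalIntegral (IlAux.integrableOn_f hα hα1 (le_of_eq hzre.symm))
  · rw [IlAux.F_boundary hα hα1 hlam, one_div, ← mul_assoc, inv_mul_cancel₀ hΓ, one_mul]
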